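/- Let E and F be normed vector spaces over ℂ, let r ∈ ℕ, and let (T_n) be a sequence of continuous linear maps from E to F, each of whose range has dimension at most r, converging in operator norm to a continuous linear map T. Then the range of T also has dimension at most r. -/

import Mathlib

/-- If a sequence of bounded operators between complex normed spaces, each of rank at most `r`,
converges in operator norm to `S`, then `S` also has rank at most `r`: the set of bounded
operators of rank at most `r` is closed in operator norm. -/
theorem rank_le_of_tendsto {E F : Type*}
    [NormedAddCommGroup E] [NormedSpace ℂ E] [NormedAddCommGroup F] [NormedSpace ℂ F]
    (r : ℕ) (T : ℕ → E →L[ℂ] F)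
    (hrank : ∀ n, Module.rank ℂ (LinearMap.range (T n : E →ₗ[ℂ] F)) ≤ r)
    (S : E →L[ℂ] F)
    (hconv : Filter.Tendsto T Filter.atTop (nhds S)) :
    Module.rank ℂ (LinearMap.range (S : E →ₗ[ℂ] F)) ≤ r := by
  apply rank_le
  intro s hs
  -- choose preimages
  have hx : ∀ i : s, ∃ x : E, S x = (i : LinearMap.range (S : E →ₗ[ℂ] F)) := by
    rintro ⟨⟨y, hy⟩, hi⟩
    obtain ⟨x, hx⟩ := hy
    exact ⟨x, hx⟩
  choose x hxeq using hx
  -- the family S ∘ x is linearly independent in F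
  have hSx : LinearIndependent ℂ fun i : s => S (x i) := by
    have := hs.map' (LinearMap.range (S : E →ₗ[ℂ] F)).subtype
      (Submodule.ker_subtype _)
    convert this using 1
    funext i
    rw [hxeq i]
    rfl
    rfl
  -- pointwise convergence of the tuples
  have htend : Filter.Tendsto (fun n => fun i : s => (T n) (x i)) Filter.atTop
      (nhds fun i : s => S (x i)) := by
    rw [tendsto_pi_nhds]
    intro i
    exact (ContinuousLinearMap.apply ℂ F (x i)).continuous.continuousAt.tendsto.comp hconv
  -- linear independence is open
  have : ∀ᶠ n in Filter.atTop, LinearIndependent ℂ fun i : s => (T n) (x i) :=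
    htend.eventually hSx.eventually
  obtain ⟨n, hn⟩ := this.exists
  -- so rank of T n is at least card s
  have hcard : (s.card : Cardinal) ≤ Module.rank ℂ (LinearMap.range ((T n) : E →ₗ[ℂ] F)) := by
    have hspan := rank_span hn
    rw [Cardinal.mk_range_eq _ hn.injective, Cardinal.mk_coe_finset] at hspan
    rw [← hspan]
    apply Submodule.rank_mono
    rw [Submodule.span_le]
    rintro _ ⟨i, rfl⟩
    exact LinearMap.mem_range_self _ _
  have := hcard.trans (hrank n)
  exact_mod_cast this
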